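/- Let G and H be finite graphs on the same vertex set, and suppose there is ι > 0 such that for every vertex u, the degree of u in H is at most ι times the degree of u in G. Then λ_{1,p}(G ∪ H) ≥ (1+ι)^{-1}·λ_{1,p}(G), where G ∪ H has edge set the union of the two edge sets. -/

import Mathlib

open Finset

/-- The valency (degree) of a vertex `u` in the multigraph with edge set `E`,
each edge `e` having endpoints `(ends e).1` and `(ends e).2`. -/
def graphVal {V E : Type} [Fintype E] [DecidableEq V] (ends : E → V × V) (u : V) : ℕ :=
  ∑ e : E, ((if (ends e).1 = u then 1 else 0) + (if (ends e).2 = u then 1 else 0))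

/-- The p-energy ‖dx‖_p^p = Σ_e |x(e_+) - x(e_-)|^p of a function on the vertices. -/
noncomputable def graphEnergy {V E : Type} [Fintype E] (p : ℝ) (ends : E → V × V)
    (x : V → ℝ) : ℝ :=
  ∑ e : E, |x (ends e).2 - x (ends e).1| ^ p

/-- inf_{c ∈ ℝ} Σ_u |x_u - c|^p · val(u). -/
noncomputable def graphDenom {V E : Type} [Fintype V] [Fintype E] [DecidableEq V]
    (p : ℝ) (ends : E → V × V) (x : V → ℝ) : ℝ :=
  sInf {t : ℝ | ∃ c : ℝ, t = ∑ u : V, |x u - c| ^ p * (graphVal ends u : ℝ)}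

/-- λ_{1,p}: the first positive eigenvalue of the graph p-Laplacian, via the
Rayleigh quotient characterisation: infimum over non-constant `x` of
energy/denominator. -/
noncomputable def lambda1 {V E : Type} [Fintype V] [Fintype E] [DecidableEq V]
    (p : ℝ) (ends : E → V × V) : ℝ :=
  sInf {r : ℝ | ∃ x : V → ℝ, (∃ u v : V, x u ≠ x v) ∧
    r = graphEnergy p ends x / graphDenom p ends x}

/-- Adjacency relation of the multigraph. -/
def graphAdj {V E : Type} (ends : E → V × V) (u v : V) : Prop :=
  ∃ e : E, ends e = (u, v) ∨ ends e = (v, u)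

/-- Connectivity of the multigraph. -/
def graphConnected {V E : Type} (ends : E → V × V) : Prop :=
  ∀ u v : V, Relation.ReflTransGen (graphAdj ends) u v

lemma energy_nonneg' {V E : Type} [Fintype E] (p : ℝ) (ends : E → V × V) (x : V → ℝ) :
    0 ≤ graphEnergy p ends x :=
  Finset.sum_nonneg fun _ _ => Real.rpow_nonneg (abs_nonneg _) p

lemma denomSet_nonneg' {V E : Type} [Fintype V] [Fintype E] [DecidableEq V] (p : ℝ)
    (ends : E → V × V) (x : V → ℝ) :
    ∀ t ∈ {t : ℝ | ∃ c : ℝ, t = ∑ u : V, |x u - c| ^ p * (graphVal ends u : ℝ)}, 0 ≤ t := by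
  rintro t ⟨c, rfl⟩
  exact Finset.sum_nonneg fun u _ =>
    mul_nonneg (Real.rpow_nonneg (abs_nonneg _) _) (Nat.cast_nonneg _)

lemma denom_nonneg' {V E : Type} [Fintype V] [Fintype E] [DecidableEq V] (p : ℝ)
    (ends : E → V × V) (x : V → ℝ) : 0 ≤ graphDenom p ends x :=
  Real.sInf_nonneg (denomSet_nonneg' p ends x)

/-- Adding few edges: if every vertex has degree in H at most ι times its
degree in G, then λ_{1,p}(G ∪ H) ≥ (1+ι)⁻¹·λ_{1,p}(G). -/
theorem stmt10 {V E F : Type} [Fintype V] [Fintype E] [Fintype F] [DecidableEq V]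
    (endsG : E → V × V) (endsH : F → V × V)
    (p : ℝ) (hp : 1 < p) (ι : ℝ) (hι : 0 < ι)
    (hdeg : ∀ u : V, (graphVal endsH u : ℝ) ≤ ι * (graphVal endsG u : ℝ)) :
    lambda1 p (Sum.elim endsG endsH : E ⊕ F → V × V) ≥ (1 + ι)⁻¹ * lambda1 p endsG := by
  set ends : E ⊕ F → V × V := Sum.elim endsG endsH with hends
  have h1ι : (0:ℝ) < 1 + ι := by linarith
  have hval : ∀ u : V, (graphVal ends u : ℝ) = graphVal endsG u + graphVal endsH u := by
    intro u
    rw [← Nat.cast_add]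
    congr 1
    simp [graphVal, Fintype.sum_sum_type, hends]
    rfl
  have hvalG_le : ∀ u : V, (graphVal endsG u : ℝ) ≤ graphVal ends u := by
    intro u; rw [hval]; exact le_add_of_nonneg_right (Nat.cast_nonneg _)
  have hval_le : ∀ u : V, (graphVal ends u : ℝ) ≤ (1 + ι) * graphVal endsG u := by
    intro u; rw [hval]; have := hdeg u; nlinarith
  have hE : ∀ x : V → ℝ, graphEnergy p endsG x ≤ graphEnergy p ends x := by
    intro x
    have h : graphEnergy p ends x = graphEnergy p endsG x + graphEnergy p endsH x := by
      simp [graphEnergy, Fintype.sum_sum_type, hends]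
    rw [h]; exact le_add_of_nonneg_right (energy_nonneg' p endsH x)
  -- denominator comparisons
  have hSG_ne : ∀ x : V → ℝ,
      {t : ℝ | ∃ c : ℝ, t = ∑ u : V, |x u - c| ^ p * (graphVal endsG u : ℝ)}.Nonempty :=
    fun x => ⟨_, 0, rfl⟩
  have hSU_ne : ∀ x : V → ℝ,
      {t : ℝ | ∃ c : ℝ, t = ∑ u : V, |x u - c| ^ p * (graphVal ends u : ℝ)}.Nonempty :=
    fun x => ⟨_, 0, rfl⟩
  have hSG_bdd : ∀ x : V → ℝ,
      BddBelow {t : ℝ | ∃ c : ℝ, t = ∑ u : V, |x u - c| ^ p * (graphVal endsG u : ℝ)} :=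
    fun x => ⟨0, denomSet_nonneg' p endsG x⟩
  have hSU_bdd : ∀ x : V → ℝ,
      BddBelow {t : ℝ | ∃ c : ℝ, t = ∑ u : V, |x u - c| ^ p * (graphVal ends u : ℝ)} :=
    fun x => ⟨0, denomSet_nonneg' p ends x⟩
  have hDle : ∀ x : V → ℝ, graphDenom p endsG x ≤ graphDenom p ends x := by
    intro x
    apply le_csInf (hSU_ne x)
    rintro t ⟨c, rfl⟩
    refine le_trans (csInf_le (hSG_bdd x) ⟨c, rfl⟩) ?_
    exact Finset.sum_le_sum fun u _ =>
      mul_le_mul_of_nonneg_left (hvalG_le u) (Real.rpow_nonneg (abs_nonneg _) _)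
  have hDub : ∀ x : V → ℝ, graphDenom p ends x ≤ (1 + ι) * graphDenom p endsG x := by
    intro x
    have key : graphDenom p ends x / (1 + ι) ≤ graphDenom p endsG x := by
      apply le_csInf (hSG_ne x)
      rintro t ⟨c, rfl⟩
      rw [div_le_iff₀ h1ι]
      calc graphDenom p ends x ≤ ∑ u : V, |x u - c| ^ p * (graphVal ends u : ℝ) :=
            csInf_le (hSU_bdd x) ⟨c, rfl⟩
        _ ≤ ∑ u : V, |x u - c| ^ p * ((1 + ι) * (graphVal endsG u : ℝ)) :=
            Finset.sum_le_sum fun u _ =>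
              mul_le_mul_of_nonneg_left (hval_le u) (Real.rpow_nonneg (abs_nonneg _) _)
        _ = (∑ u : V, |x u - c| ^ p * (graphVal endsG u : ℝ)) * (1 + ι) := by
            rw [Finset.sum_mul]; exact Finset.sum_congr rfl fun u _ => by ring
    rw [div_le_iff₀ h1ι] at key
    linarith
  by_cases hx : ∃ x : V → ℝ, ∃ u v : V, x u ≠ x v
  · obtain ⟨x0, hx0⟩ := hx
    rw [ge_iff_le]
    conv_rhs => rw [lambda1]
    have hne : {r : ℝ | ∃ x : V → ℝ, (∃ u v : V, x u ≠ x v) ∧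
        r = graphEnergy p ends x / graphDenom p ends x}.Nonempty := ⟨_, x0, hx0, rfl⟩
    apply le_csInf hne
    rintro r ⟨x, hxc, rfl⟩
    have hlam : lambda1 p endsG ≤ graphEnergy p endsG x / graphDenom p endsG x := by
      apply csInf_le
      · refine ⟨0, ?_⟩
        rintro s ⟨y, -, rfl⟩
        exact div_nonneg (energy_nonneg' p endsG y) (denom_nonneg' p endsG y)
      · exact ⟨x, hxc, rfl⟩
    have key2 : (1 + ι)⁻¹ * (graphEnergy p endsG x / graphDenom p endsG x) ≤
        graphEnergy p ends x / graphDenom p ends x := by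
      rcases eq_or_lt_of_le (denom_nonneg' p ends x) with h0 | h0
      · have hDG0 : graphDenom p endsG x = 0 :=
          le_antisymm (le_trans (hDle x) h0.symm.le) (denom_nonneg' p endsG x)
        simp [← h0, hDG0]
      · have hDG : 0 < graphDenom p endsG x := by
          have := hDub x; nlinarith
        have heq : (1 + ι)⁻¹ * (graphEnergy p endsG x / graphDenom p endsG x) =
            graphEnergy p endsG x / (graphDenom p endsG x * (1 + ι)) := by
          rw [inv_mul_eq_div, div_div]
        rw [heq]
        apply div_le_div₀ (energy_nonneg' p ends x) (hE x) h0
        have := hDub x; linarith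
    calc (1 + ι)⁻¹ * lambda1 p endsG
        ≤ (1 + ι)⁻¹ * (graphEnergy p endsG x / graphDenom p endsG x) :=
          mul_le_mul_of_nonneg_left hlam (by positivity)
      _ ≤ _ := key2
  · push_neg at hx
    have e1 : {r : ℝ | ∃ x : V → ℝ, (∃ u v : V, x u ≠ x v) ∧
        r = graphEnergy p ends x / graphDenom p ends x} = ∅ := by
      ext r
      simp only [Set.mem_setOf_eq, Set.mem_empty_iff_false, iff_false]
      rintro ⟨x, ⟨u, v, huv⟩, -⟩
      exact huv (hx x u v)
    have e2 : {r : ℝ | ∃ x : V → ℝ, (∃ u v : V, x u ≠ x v) ∧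
        r = graphEnergy p endsG x / graphDenom p endsG x} = ∅ := by
      ext r
      simp only [Set.mem_setOf_eq, Set.mem_empty_iff_false, iff_false]
      rintro ⟨x, ⟨u, v, huv⟩, -⟩
      exact huv (hx x u v)
    unfold lambda1
    rw [e1, e2, Real.sInf_empty]
    simp
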